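/- arXiv:2010.04347 — 2 statements merged into one kernel-verified Lean document; each statement's English description precedes it below -/
import Mathlib

section
/- Let α > 0 and β > 0, and let f(x) = αβ·exp(−α(x^{−β} − 1))/x^{1+β} for x ∈ (0,1). Define h(x) = (α^{1/β}/(αβ))·exp(α/x^β)·x^{1+β}·[Γ(1 − 1/β; α) − Γ(1 − 1/β; α/x^β)]. Then for every x ∈ (0,1), ∫_x^1 t·f(t) dt = h(x)·f(x); equivalently, with F(x) = exp(−α(x^{−β} − 1)), the conditional expectation satisfies E(X | X ≥ x) = h(x)·f(x)/(1 − F(x)) when X has density f. -/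
open Real MeasureTheory Set

/-- The upper incomplete gamma function `Γ(s; y) = ∫_y^∞ t^(s-1) e^(-t) dt`. -/
noncomputable def uiGamma (s y : ℝ) : ℝ :=
  ∫ t in Set.Ioi y, t ^ (s - 1) * Real.exp (-t)

lemma uiGamma_integrableOn {s a : ℝ} (ha : 0 < a) :
    IntegrableOn (fun t => t ^ (s - 1) * Real.exp (-t)) (Set.Ioi a) := by
  refine integrable_of_isBigO_exp_neg (b := 1/2) (by norm_num) ?_ ?_
  · refine ContinuousOn.mul ?_ (Real.continuous_exp.comp continuous_neg).continuousOn
    exact fun t ht =>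
      (Real.continuousAt_rpow_const t _ (Or.inl (lt_of_lt_of_le ha ht).ne')).continuousWithinAt
  · exact (Real.Gamma_integrand_isLittleO (s - 1)).isBigO.congr_left fun t => mul_comm _ _

lemma uiGamma_sub {s a b : ℝ} (ha : 0 < a) (hab : a ≤ b) :
    uiGamma s a - uiGamma s b = ∫ u in a..b, u ^ (s - 1) * Real.exp (-u) := by
  have hint := uiGamma_integrableOn (s := s) ha
  have hsplit : uiGamma s a = (∫ u in Set.Ioc a b, u ^ (s - 1) * Real.exp (-u)) + uiGamma s b := by
    rw [uiGamma, ← Set.Ioc_union_Ioi_eq_Ioi hab,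
      MeasureTheory.setIntegral_union (Set.Ioc_disjoint_Ioi le_rfl) measurableSet_Ioi
        (hint.mono_set Set.Ioc_subset_Ioi_self)
        (hint.mono_set (Set.Ioi_subset_Ioi hab))]
    rfl
  rw [intervalIntegral.integral_of_le hab]
  linarith

/-- **Theorem 2, direct part.** For `α, β > 0`, the unit-Gompertz density
`f x = α * β * exp (-α * (x ^ (-β) - 1)) / x ^ (1 + β)` and the function
`h x = (α^(1/β) / (α * β)) * exp (α / x^β) * x^(1+β) *
  (Γ(1 - 1/β; α) - Γ(1 - 1/β; α / x^β))`
satisfy `∫ t in x..1, t * f t = h x * f x` for every `x ∈ (0, 1)`; equivalently,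
with `F x = exp (-α * (x ^ (-β) - 1))`, the conditional expectation satisfies
`E(X | X ≥ x) = h x * f x / (1 - F x)`. -/
theorem unitGompertz_right_truncated_identity (α β : ℝ) (hα : 0 < α) (hβ : 0 < β)
    (f h F : ℝ → ℝ)
    (hf : f = fun x => α * β * Real.exp (-α * (x ^ (-β) - 1)) / x ^ (1 + β))
    (hh : h = fun x => α ^ (1 / β) / (α * β) * Real.exp (α / x ^ β) * x ^ (1 + β) *
      (uiGamma (1 - 1 / β) α - uiGamma (1 - 1 / β) (α / x ^ β)))
    (hF : F = fun x => Real.exp (-α * (x ^ (-β) - 1))) :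
    ∀ x ∈ Set.Ioo (0:ℝ) 1,
      (∫ t in x..(1:ℝ), t * f t) = h x * f x ∧
      (∫ t in x..(1:ℝ), t * f t) / (1 - F x) = h x * f x / (1 - F x) := by
  subst hf hh hF
  intro x hx
  obtain ⟨hx0, hx1⟩ := hx
  have hβ' : β ≠ 0 := hβ.ne'
  set s : ℝ := 1 - 1 / β with hs
  have hs1 : s - 1 = -(1 / β) := by rw [hs]; ring
  have hxβ : (0:ℝ) < x ^ β := Real.rpow_pos_of_pos hx0 β
  have hxβ1 : x ^ β ≤ 1 := Real.rpow_le_one hx0.le hx1.le hβ.le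
  have hb0 : 0 < α / x ^ β := div_pos hα hxβ
  have hble : α ≤ α / x ^ β := by
    rw [le_div_iff₀ hxβ]; nlinarith
  have hxneg : x ^ (-β) = (x ^ β)⁻¹ := Real.rpow_neg hx0.le β
  have hdiv : α / x ^ β = α * x ^ (-β) := by rw [hxneg, div_eq_mul_inv]
  -- the substitution
  set φ : ℝ → ℝ := fun t => α * t ^ (-β) with hφ
  set φ' : ℝ → ℝ := fun t => α * (-β * t ^ (-β - 1)) with hφ'
  set g : ℝ → ℝ := fun u => u ^ (s - 1) * Real.exp (-u) with hg
  have huIcc : Set.uIcc x (1:ℝ) = Set.Icc x 1 := Set.uIcc_of_le hx1.le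
  have htpos : ∀ t ∈ Set.uIcc x (1:ℝ), 0 < t := by
    rw [huIcc]; exact fun t ht => lt_of_lt_of_le hx0 ht.1
  have hderiv : ∀ t ∈ Set.uIcc x (1:ℝ), HasDerivAt φ (φ' t) t := by
    intro t ht
    exact (Real.hasDerivAt_rpow_const (Or.inl (htpos t ht).ne')).const_mul α
  have hφ'cont : ContinuousOn φ' (Set.uIcc x 1) := by
    refine continuousOn_const.mul (continuousOn_const.mul ?_)
    exact fun t ht =>
      (Real.continuousAt_rpow_const t _ (Or.inl (htpos t ht).ne')).continuousWithinAt
  have hgcont : ContinuousOn g (φ '' Set.uIcc x 1) := by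
    rintro u ⟨t, ht, rfl⟩
    have hu : 0 < φ t := mul_pos hα (Real.rpow_pos_of_pos (htpos t ht) _)
    exact ((Real.continuousAt_rpow_const _ _ (Or.inl hu.ne')).mul
      ((Real.continuous_exp.comp continuous_neg).continuousAt)).continuousWithinAt
  have hsub : (∫ t in x..(1:ℝ), φ' t • (g ∘ φ) t) = ∫ u in φ x..φ 1, g u :=
    intervalIntegral.integral_comp_smul_deriv' hderiv hφ'cont hgcont
  have hφ1 : φ 1 = α := by simp [hφ]
  have hφx : φ x = α / x ^ β := by rw [hdiv]
  -- pointwise identity for the integrand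
  have hpt : ∀ t ∈ Set.uIcc x (1:ℝ),
      t * (α * β * Real.exp (-α * (t ^ (-β) - 1)) / t ^ (1 + β))
        = -(α ^ (1 / β) * Real.exp α) * (φ' t • (g ∘ φ) t) := by
    intro t ht
    have ht0 : 0 < t := htpos t ht
    have hA : 0 < t ^ β := Real.rpow_pos_of_pos ht0 β
    have h1 : t ^ (-β) = (t ^ β)⁻¹ := Real.rpow_neg ht0.le β
    have h2 : t ^ (1 + β) = t * t ^ β := by
      rw [Real.rpow_add ht0, Real.rpow_one]
    have h3 : t ^ (-β - 1) = (t ^ β)⁻¹ * t⁻¹ := by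
      rw [show -β - 1 = -β + -1 by ring, Real.rpow_add ht0, h1, Real.rpow_neg_one]
    have h4 : (α * t ^ (-β)) ^ (s - 1) = α ^ (-(1 / β)) * t := by
      rw [hs1, Real.mul_rpow hα.le (Real.rpow_nonneg ht0.le _), ← Real.rpow_mul ht0.le,
        show -β * -(1 / β) = 1 by field_simp, Real.rpow_one]
    have h5 : α ^ (1 / β) * α ^ (-(1 / β)) = 1 := by
      rw [← Real.rpow_add hα]; simp
    have hexp : Real.exp α * Real.exp (-(α * (t ^ β)⁻¹)) = Real.exp (-α * ((t ^ β)⁻¹ - 1)) := by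
      rw [← Real.exp_add]; ring_nf
    have h4' : (α * (t ^ β)⁻¹) ^ (s - 1) = (α ^ (1 / β))⁻¹ * t := by
      rw [← h1, h4, ← Real.rpow_neg_one (α ^ (1 / β)), ← Real.rpow_mul hα.le,
        show (1 / β) * (-1 : ℝ) = -(1 / β) by ring]
    have hP : α ^ (1 / β) ≠ 0 := (Real.rpow_pos_of_pos hα _).ne'
    simp only [hφ', hg, hφ, Function.comp, smul_eq_mul, h1, h2, h3, h4']
    rw [← hexp]
    field_simp
  have key : (∫ t in x..(1:ℝ), t * (α * β * Real.exp (-α * (t ^ (-β) - 1)) / t ^ (1 + β)))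
      = α ^ (1 / β) * Real.exp α * (uiGamma s α - uiGamma s (α / x ^ β)) := by
    rw [intervalIntegral.integral_congr hpt, intervalIntegral.integral_const_mul, hsub,
      hφ1, hφx, intervalIntegral.integral_symm, ← uiGamma_sub hα hble]
    ring
  -- final algebra
  have hx1β : (0:ℝ) < x ^ (1 + β) := Real.rpow_pos_of_pos hx0 _
  have hexp2 : Real.exp (α / x ^ β) * Real.exp (-α * (x ^ (-β) - 1)) = Real.exp α := by
    rw [← Real.exp_add, hxneg, div_eq_mul_inv]; ring_nf
  have hrhs : (α ^ (1 / β) / (α * β) * Real.exp (α / x ^ β) * x ^ (1 + β) *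
        (uiGamma s α - uiGamma s (α / x ^ β))) *
        (α * β * Real.exp (-α * (x ^ (-β) - 1)) / x ^ (1 + β))
      = α ^ (1 / β) * Real.exp α * (uiGamma s α - uiGamma s (α / x ^ β)) := by
    rw [← hexp2]
    field_simp
  refine ⟨?_, ?_⟩
  · simp only []
    rw [key, ← hrhs]
  · simp only []
    rw [key, ← hrhs]
end

section
/- Let α > 0 and β > 0, and define h(x) = (α^{1/β}/(αβ))·exp(α/x^β)·x^{1+β}·[Γ(1 − 1/β; α) − Γ(1 − 1/β; α/x^β)] for x ∈ (0,1), where Γ(s; y) = ∫_y^∞ t^{s−1} e^{−t} dt. Suppose f is a positive, differentiable function on (0,1) with ∫_0^1 f(t) dt = 1 (with t·f(t) integrable on (0,1)) such that for every x ∈ (0,1), ∫_x^1 t·f(t) dt = h(x)·f(x). Then f(x) = αβ·exp(−α(x^{−β} − 1))/x^{1+β} for every x ∈ (0,1), i.e., f is the unit-Gompertz density with parameters α and β. -/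
open Real MeasureTheory Set intervalIntegral

lemma ig_integrableOn {c y : ℝ} (hc : c ≤ 0) (hy : 0 < y) :
    IntegrableOn (fun t : ℝ => t ^ c * Real.exp (-t)) (Set.Ioi y) := by
  have hbound : IntegrableOn (fun t : ℝ => y ^ c * Real.exp (-t)) (Set.Ioi y) := by
    have := (exp_neg_integrableOn_Ioi y one_pos).const_mul (y ^ c)
    simp only [neg_one_mul] at this
    exact this
  refine hbound.mono' ?_ ?_
  · exact ((continuousOn_id.rpow_const (fun t ht => Or.inl (lt_trans hy ht).ne')).mul
      (Real.continuous_exp.comp continuous_neg).continuousOn).aestronglyMeasurable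
      measurableSet_Ioi
  · filter_upwards [ae_restrict_mem measurableSet_Ioi] with t ht
    have h1 : t ^ c ≤ y ^ c := Real.rpow_le_rpow_of_nonpos hy (le_of_lt ht) hc
    have h2 : 0 ≤ t ^ c := Real.rpow_nonneg (le_of_lt (lt_trans hy ht)) c
    rw [Real.norm_eq_abs, abs_of_nonneg (mul_nonneg h2 (Real.exp_pos _).le)]
    exact mul_le_mul_of_nonneg_right h1 (Real.exp_pos _).le

lemma uiGamma_split {s y z : ℝ} (hs : s ≤ 1) (hy : 0 < y) (hyz : y ≤ z) :
    uiGamma s y - uiGamma s z = ∫ t in y..z, t ^ (s - 1) * Real.exp (-t) := by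
  have hz : 0 < z := lt_of_lt_of_le hy hyz
  have hIoc : IntegrableOn (fun t : ℝ => t ^ (s - 1) * Real.exp (-t)) (Set.Ioc y z) :=
    (ig_integrableOn (by linarith) hy).mono_set Set.Ioc_subset_Ioi_self
  have hIoi : IntegrableOn (fun t : ℝ => t ^ (s - 1) * Real.exp (-t)) (Set.Ioi z) :=
    ig_integrableOn (by linarith) hz
  have hsplit : uiGamma s y =
      (∫ t in Set.Ioc y z, t ^ (s - 1) * Real.exp (-t)) + uiGamma s z := by
    rw [uiGamma, uiGamma, ← Set.Ioc_union_Ioi_eq_Ioi hyz,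
      MeasureTheory.setIntegral_union (Set.Ioc_disjoint_Ioi le_rfl) measurableSet_Ioi hIoc hIoi]
  rw [hsplit, intervalIntegral.integral_of_le hyz]
  ring

lemma uiGamma_hasDerivAt {s y : ℝ} (hs : s ≤ 1) (hy : 0 < y) :
    HasDerivAt (uiGamma s) (-(y ^ (s - 1) * Real.exp (-y))) y := by
  set a := y / 2 with ha
  have hay : a < y := by simp [ha]; linarith
  have ha0 : 0 < a := by positivity
  have hcont : ContinuousOn (fun t : ℝ => t ^ (s - 1) * Real.exp (-t)) (Set.Ioi 0) :=
    (continuousOn_id.rpow_const (fun t ht => Or.inl (ne_of_gt ht))).mul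
      (Real.continuous_exp.comp continuous_neg).continuousOn
  have hint : IntervalIntegrable (fun t : ℝ => t ^ (s - 1) * Real.exp (-t)) volume a y := by
    rw [intervalIntegrable_iff_integrableOn_Icc_of_le hay.le]
    exact (ig_integrableOn (by linarith : s - 1 ≤ 0) (half_pos ha0)).mono_set
      (fun t ht => lt_of_lt_of_le (by linarith) ht.1)
  have hmeas : StronglyMeasurableAtFilter (fun t : ℝ => t ^ (s - 1) * Real.exp (-t)) (nhds y) :=
    hcont.stronglyMeasurableAtFilter isOpen_Ioi _ hy
  have hca : ContinuousAt (fun t : ℝ => t ^ (s - 1) * Real.exp (-t)) y :=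
    (hcont.continuousAt (Ioi_mem_nhds hy))
  have hD : HasDerivAt (fun z => ∫ t in a..z, t ^ (s - 1) * Real.exp (-t))
      (y ^ (s - 1) * Real.exp (-y)) y :=
    intervalIntegral.integral_hasDerivAt_right hint hmeas hca
  have heq : (fun z => uiGamma s a - ∫ t in a..z, t ^ (s - 1) * Real.exp (-t)) =ᶠ[nhds y]
      uiGamma s := by
    filter_upwards [Ioi_mem_nhds hay] with z hz
    have := uiGamma_split hs ha0 (le_of_lt hz)
    linarith
  have := ((hasDerivAt_const y (uiGamma s a)).sub hD).congr_of_eventuallyEq heq.symm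
  simpa using this

section G
variable {α β : ℝ}

/-- the unit-Gompertz density -/
noncomputable def gfun (α β x : ℝ) : ℝ := α * β * Real.exp (-α * (x ^ (-β) - 1)) / x ^ (1 + β)

lemma gfun_pos (hα : 0 < α) (hβ : 0 < β) {x : ℝ} (hx : 0 < x) : 0 < gfun α β x := by
  have h1 : 0 < x ^ (1 + β) := Real.rpow_pos_of_pos hx _
  have h2 : 0 < Real.exp (-α * (x ^ (-β) - 1)) := Real.exp_pos _
  unfold gfun
  positivity

lemma gfun_continuousOn : ContinuousOn (gfun α β) (Set.Ioi 0) := by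
  unfold gfun
  apply ContinuousOn.div
  · exact continuousOn_const.mul (Real.continuous_exp.comp_continuousOn
      (continuousOn_const.mul ((continuousOn_id.rpow_const
        (fun t ht => Or.inl (ne_of_gt ht))).sub continuousOn_const)))
  · exact continuousOn_id.rpow_const (fun t ht => Or.inl (ne_of_gt ht))
  · exact fun t ht => (Real.rpow_pos_of_pos ht _).ne'

lemma hasDerivAt_Phi (hα : 0 < α) (hβ : 0 < β) {x : ℝ} (hx : 0 < x) :
    HasDerivAt (fun x => Real.exp α * α ^ (1/β) *
      (uiGamma (1 - 1/β) α - uiGamma (1 - 1/β) (α * x ^ (-β))))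
      (-(x * gfun α β x)) x := by
  have hu : HasDerivAt (fun x : ℝ => α * x ^ (-β)) (α * (-β * x ^ (-β - 1))) x :=
    (Real.hasDerivAt_rpow_const (Or.inl hx.ne')).const_mul α
  have hupos : 0 < α * x ^ (-β) := mul_pos hα (Real.rpow_pos_of_pos hx _)
  have hs1 : (1 : ℝ) - 1/β ≤ 1 := by
    have : 0 < 1/β := by positivity
    linarith
  have hG : HasDerivAt (uiGamma (1 - 1/β))
      (-((α * x ^ (-β)) ^ (1 - 1/β - 1) * Real.exp (-(α * x ^ (-β))))) (α * x ^ (-β)) :=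
    uiGamma_hasDerivAt hs1 hupos
  have hcomp := (hG.comp x hu).const_mul (Real.exp α * α ^ (1/β))
  simp only [Function.comp] at hcomp
  have this1 := ((hasDerivAt_const x (Real.exp α * α ^ (1/β) * uiGamma (1 - 1/β) α)).sub hcomp)
  have heq : ∀ z : ℝ, Real.exp α * α ^ (1/β) * uiGamma (1 - 1/β) α -
      Real.exp α * α ^ (1/β) * uiGamma (1 - 1/β) (α * z ^ (-β)) =
      Real.exp α * α ^ (1/β) *
        (uiGamma (1 - 1/β) α - uiGamma (1 - 1/β) (α * z ^ (-β))) := fun z => by ring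
  simp only [Pi.sub_def, heq] at this1
  refine this1.congr_deriv ?_
  symm
  have hpow : (α * x ^ (-β)) ^ (1 - 1/β - 1) = α ^ (-(1/β)) * x := by
    rw [show (1 - 1/β - 1 : ℝ) = -(1/β) by ring,
      Real.mul_rpow hα.le (Real.rpow_nonneg hx.le _), ← Real.rpow_mul hx.le]
    rw [show (-β * -(1/β) : ℝ) = 1 by field_simp, Real.rpow_one]
  rw [hpow]
  unfold gfun
  have h1 : Real.exp (-α * (x ^ (-β) - 1)) = Real.exp α * Real.exp (-(α * x ^ (-β))) := by
    rw [← Real.exp_add]; ring_nf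
  have h3 : α ^ (-(1/β)) = (α ^ (1/β))⁻¹ := by rw [Real.rpow_neg hα.le]
  have h4 : x ^ (1 + β) = x ^ (β + 1) := by ring_nf
  have h5 : x ^ (-β - 1) * x ^ (β + 1) = 1 := by
    rw [← Real.rpow_add hx]; norm_num
  rw [h1, h3, h4]
  have hxb1 : (0:ℝ) < x ^ (β + 1) := Real.rpow_pos_of_pos hx _
  have hab : (0:ℝ) < α ^ (1/β) := Real.rpow_pos_of_pos hα _
  field_simp
  linear_combination (x * α * β * Real.exp α * Real.exp (-(α * x ^ (-β)))) * h5

end G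

section G2
variable {α β : ℝ}

lemma tg_continuousOn : ContinuousOn (fun t => t * gfun α β t) (Set.Ioi 0) :=
  continuousOn_id.mul gfun_continuousOn

lemma hasDerivAt_T (hα : 0 < α) (hβ : 0 < β) {z : ℝ} (hz : 0 < z) :
    HasDerivAt (fun z => ∫ t in z..(1:ℝ), t * gfun α β t) (-(z * gfun α β z)) z := by
  have hsub : Set.uIcc z 1 ⊆ Set.Ioi (0:ℝ) := by
    intro t ht
    have := ht.1
    have h2 : min z 1 ≤ t := ht.1
    have : (0:ℝ) < min z 1 := lt_min hz one_pos
    exact lt_of_lt_of_le this h2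
  have hint : IntervalIntegrable (fun t => t * gfun α β t) volume z 1 :=
    (tg_continuousOn.mono hsub).intervalIntegrable
  have hmeas : StronglyMeasurableAtFilter (fun t => t * gfun α β t) (nhds z) :=
    tg_continuousOn.stronglyMeasurableAtFilter isOpen_Ioi _ hz
  have hca : ContinuousAt (fun t => t * gfun α β t) z :=
    tg_continuousOn.continuousAt (Ioi_mem_nhds hz)
  exact intervalIntegral.integral_hasDerivAt_left hint hmeas hca

lemma integral_tg (hα : 0 < α) (hβ : 0 < β) {x : ℝ} (hx : 0 < x) (hx1 : x ≤ 1) :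
    ∫ t in x..(1:ℝ), t * gfun α β t =
      Real.exp α * α ^ (1/β) *
        (uiGamma (1 - 1/β) α - uiGamma (1 - 1/β) (α * x ^ (-β))) := by
  set F : ℝ → ℝ := fun z => (∫ t in z..(1:ℝ), t * gfun α β t) -
    Real.exp α * α ^ (1/β) * (uiGamma (1 - 1/β) α - uiGamma (1 - 1/β) (α * z ^ (-β))) with hF
  have hF1 : F 1 = 0 := by
    simp [hF, Real.one_rpow, intervalIntegral.integral_same]
  have hFd : ∀ z ∈ Set.Ioi (0:ℝ), HasDerivAt F 0 z := by
    intro z hz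
    have := (hasDerivAt_T hα hβ hz).sub (hasDerivAt_Phi hα hβ hz)
    simpa [hF, Pi.sub_def] using this
  have hFx : F x = 0 := by
    rcases eq_or_lt_of_le hx1 with heq | hlt
    · rw [heq]; exact hF1
    · have hcont : ContinuousOn F (Set.Icc x 1) := fun t ht =>
        ((hFd t (lt_of_lt_of_le hx ht.1)).continuousAt).continuousWithinAt
      obtain ⟨c, hc, hc'⟩ := exists_hasDerivAt_eq_slope F (fun _ => 0) hlt hcont
        (fun t ht => hFd t (lt_of_lt_of_le hx ht.1.le))
      have h1x : (1:ℝ) - x ≠ 0 := sub_ne_zero.mpr (by linarith)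
      have hc2 : (F 1 - F x) / (1 - x) = 0 := by
        rw [← hc']
      have := (div_eq_iff h1x).mp hc2
      linarith [hF1]
  have := hFx
  rw [hF] at this
  linarith

section G3
variable {α β : ℝ}

lemma hg_eq (hα : 0 < α) (hβ : 0 < β) {x : ℝ} (hx : 0 < x) :
    α ^ (1 / β) / (α * β) * Real.exp (α / x ^ β) * x ^ (1 + β) *
      (uiGamma (1 - 1/β) α - uiGamma (1 - 1/β) (α / x ^ β)) * gfun α β x =
    Real.exp α * α ^ (1/β) *
      (uiGamma (1 - 1/β) α - uiGamma (1 - 1/β) (α * x ^ (-β))) := by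
  simp only [one_div]
  have hdiv : α / x ^ β = α * x ^ (-β) := by
    rw [Real.rpow_neg hx.le, div_eq_mul_inv]
  rw [hdiv]
  unfold gfun
  rw [show -α * (x ^ (-β) - 1) = α - α * x ^ (-β) from by ring]
  have hE : Real.exp (α * x ^ (-β)) * Real.exp (α - α * x ^ (-β)) = Real.exp α := by
    rw [← Real.exp_add]; ring_nf
  have hxb : (0:ℝ) < x ^ (1 + β) := Real.rpow_pos_of_pos hx _
  generalize uiGamma (1 - β⁻¹) α - uiGamma (1 - β⁻¹) (α * x ^ (-β)) = D
  field_simp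
  rw [show α * (1 - x ^ (-β)) = α - α * x ^ (-β) by ring]
  linear_combination D * hE

lemma hasDerivAt_A (hα : 0 < α) (hβ : 0 < β) {x : ℝ} (hx : 0 < x) :
    HasDerivAt (fun x : ℝ => Real.exp (α - α * x ^ (-β))) (gfun α β x) x := by
  have hu : HasDerivAt (fun x : ℝ => α - α * x ^ (-β))
      (-(α * (-β * x ^ (-β - 1)))) x :=
    ((Real.hasDerivAt_rpow_const (Or.inl hx.ne')).const_mul α).const_sub α
  have := hu.exp
  convert this using 1
  unfold gfun
  rw [show -α * (x ^ (-β) - 1) = α - α * x ^ (-β) by ring]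
  rw [div_eq_mul_inv, ← Real.rpow_neg hx.le (1 + β), show (-(1 + β) : ℝ) = -β - 1 by ring]
  ring

lemma integral_g_Ioc (hα : 0 < α) (hβ : 0 < β)
    (hgint : MeasureTheory.IntegrableOn (gfun α β) (Set.Ioc 0 1)) :
    ∫ t in Set.Ioc (0:ℝ) 1, gfun α β t = 1 := by
  set A : ℝ → ℝ := fun x => if x ≤ 0 then 0 else Real.exp (α - α * x ^ (-β)) with hA
  have hA1 : A 1 = 1 := by
    simp [hA, Real.one_rpow]
  have hA0 : A 0 = 0 := by simp [hA]
  have hAeq : ∀ x : ℝ, 0 < x → A x = Real.exp (α - α * x ^ (-β)) := by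
    intro x hx; simp [hA, not_le.mpr hx]
  have htend : Filter.Tendsto A (nhdsWithin 0 (Set.Ioi 0)) (nhds 0) := by
    have h1 : Filter.Tendsto (fun x : ℝ => x ^ (-β)) (nhdsWithin 0 (Set.Ioi 0)) Filter.atTop := by
      have h2 : Filter.Tendsto (fun x : ℝ => (x⁻¹) ^ β) (nhdsWithin 0 (Set.Ioi 0)) Filter.atTop :=
        (tendsto_rpow_atTop hβ).comp tendsto_inv_nhdsGT_zero
      refine h2.congr' ?_
      filter_upwards [self_mem_nhdsWithin] with x hx
      rw [show (x⁻¹ : ℝ) = x ^ (-1:ℝ) by rw [Real.rpow_neg_one], ← Real.rpow_mul (le_of_lt hx)]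
      norm_num
    have h3 : Filter.Tendsto (fun x : ℝ => α - α * x ^ (-β)) (nhdsWithin 0 (Set.Ioi 0))
        Filter.atBot := by
      apply Filter.tendsto_atBot_add_const_left _ α
      exact (Filter.tendsto_neg_atBot_iff.mpr (h1.const_mul_atTop hα))
    have h4 := Real.tendsto_exp_atBot.comp h3
    refine h4.congr' ?_
    filter_upwards [self_mem_nhdsWithin] with x hx
    exact (hAeq x hx).symm
  have hAcont : ContinuousOn A (Set.Icc 0 1) := by
    intro x hx
    rcases eq_or_lt_of_le hx.1 with h0 | h0
    · rw [← h0]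
      rw [ContinuousWithinAt]
      rw [hA0]
      have hsub : Set.Icc (0:ℝ) 1 ⊆ insert 0 (Set.Ioi 0) := by
        intro t ht
        rcases eq_or_lt_of_le ht.1 with h | h
        · exact Or.inl h.symm
        · exact Or.inr h
      refine Filter.Tendsto.mono_left ?_ (nhdsWithin_mono 0 hsub)
      rw [nhdsWithin_insert]
      refine Filter.Tendsto.sup ?_ htend
      rw [Filter.tendsto_pure_left]
      intro U hU
      simpa [hA0] using mem_of_mem_nhds hU
    · have heq2 : A =ᶠ[nhds x] fun y => Real.exp (α - α * y ^ (-β)) := by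
        filter_upwards [Ioi_mem_nhds h0] with y hy
        exact hAeq y hy
      exact ((hasDerivAt_A hα hβ h0).continuousAt.congr heq2.symm |>.continuousWithinAt)
  have hAderiv : ∀ x ∈ Set.Ioo (0:ℝ) 1, HasDerivWithinAt A (gfun α β x) (Set.Ioi x) x := by
    intro x hx
    have heq2 : A =ᶠ[nhds x] fun y => Real.exp (α - α * y ^ (-β)) := by
      filter_upwards [Ioi_mem_nhds hx.1] with y hy
      exact hAeq y hy
    exact (((hasDerivAt_A hα hβ hx.1).congr_of_eventuallyEq heq2)).hasDerivWithinAt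
  have hint : IntervalIntegrable (gfun α β) volume 0 1 :=
    (intervalIntegrable_iff_integrableOn_Ioc_of_le zero_le_one).mpr hgint
  have := intervalIntegral.integral_eq_sub_of_hasDeriv_right_of_le zero_le_one hAcont hAderiv hint
  rw [hA1, hA0] at this
  rw [← intervalIntegral.integral_of_le zero_le_one, this]
  norm_num
end G3

/-- **Theorem 2, converse part.** Let `α, β > 0` and
`h x = (α^(1/β) / (α * β)) * exp (α / x^β) * x^(1+β) *
  (Γ(1 - 1/β; α) - Γ(1 - 1/β; α / x^β))`.
If `f` is a positive differentiable function on `(0, 1)` integrating to `1`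
(with `t * f t` integrable on `(0, 1)`) such that
`∫ t in x..1, t * f t = h x * f x` for every `x ∈ (0, 1)`, then `f` is the
unit-Gompertz density: `f x = α * β * exp (-α * (x^(-β) - 1)) / x^(1+β)` on `(0, 1)`. -/
theorem unitGompertz_characterization_right (α β : ℝ) (hα : 0 < α) (hβ : 0 < β)
    (h f : ℝ → ℝ)
    (hh : h = fun x => α ^ (1 / β) / (α * β) * Real.exp (α / x ^ β) * x ^ (1 + β) *
      (uiGamma (1 - 1 / β) α - uiGamma (1 - 1 / β) (α / x ^ β)))
    (hf_pos : ∀ x ∈ Set.Ioo (0:ℝ) 1, 0 < f x)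
    (hf_diff : ∀ x ∈ Set.Ioo (0:ℝ) 1, DifferentiableAt ℝ f x)
    (hf_int : (∫ t in (0:ℝ)..1, f t) = 1)
    (hint : IntervalIntegrable (fun t => t * f t) MeasureTheory.volume 0 1)
    (hid : ∀ x ∈ Set.Ioo (0:ℝ) 1, (∫ t in x..(1:ℝ), t * f t) = h x * f x) :
    ∀ x ∈ Set.Ioo (0:ℝ) 1,
      f x = α * β * Real.exp (-α * (x ^ (-β) - 1)) / x ^ (1 + β) := by
  -- identity for the unit-Gompertz density
  have hGg : ∀ x ∈ Set.Ioo (0:ℝ) 1, (∫ t in x..(1:ℝ), t * gfun α β t) = h x * gfun α β x := by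
    intro x hx
    rw [integral_tg hα hβ hx.1 hx.2.le, hh]
    exact (hg_eq hα hβ hx.1).symm
  have htf_cont : ContinuousOn (fun t => t * f t) (Set.Ioo 0 1) :=
    continuousOn_id.mul (fun x hx => (hf_diff x hx).continuousAt.continuousWithinAt)
  have hTf : ∀ x ∈ Set.Ioo (0:ℝ) 1,
      HasDerivAt (fun z => ∫ t in z..(1:ℝ), t * f t) (-(x * f x)) x := by
    intro x hx
    have hmono : Set.uIcc x 1 ⊆ Set.uIcc (0:ℝ) 1 :=
      Set.uIcc_subset_uIcc (by simp [Set.uIcc_of_le (zero_le_one' ℝ)]; constructor <;>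
        [exact hx.1.le; exact hx.2.le]) (by simp [Set.uIcc_of_le (zero_le_one' ℝ)])
    have h1 : HasDerivAt (fun z => ∫ t in z..(1:ℝ), t * f t) (-(x * f x)) x := by
      apply intervalIntegral.integral_hasDerivAt_left (hint.mono_set hmono)
        (htf_cont.stronglyMeasurableAtFilter isOpen_Ioo _ hx)
        (htf_cont.continuousAt (Ioo_mem_nhds hx.1 hx.2))
    exact h1
  have hTg : ∀ x ∈ Set.Ioo (0:ℝ) 1,
      HasDerivAt (fun z => ∫ t in z..(1:ℝ), t * gfun α β t) (-(x * gfun α β x)) x :=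
    fun x hx => hasDerivAt_T hα hβ hx.1
  have hGgpos : ∀ x ∈ Set.Ioo (0:ℝ) 1, 0 < ∫ t in x..(1:ℝ), t * gfun α β t := by
    intro x hx
    have hsub : Set.uIcc x 1 ⊆ Set.Ioi (0:ℝ) := fun t ht =>
      lt_of_lt_of_le (lt_min hx.1 one_pos) ht.1
    refine intervalIntegral.intervalIntegral_pos_of_pos_on
      ((tg_continuousOn.mono hsub).intervalIntegrable) ?_ hx.2
    intro t ht
    exact mul_pos (lt_trans hx.1 ht.1) (gfun_pos hα hβ (lt_trans hx.1 ht.1))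
  have hgp : ∀ x ∈ Set.Ioo (0:ℝ) 1, 0 < gfun α β x := fun x hx => gfun_pos hα hβ hx.1
  have hhpos : ∀ x ∈ Set.Ioo (0:ℝ) 1, 0 < h x := by
    intro x hx
    have h1 := hGgpos x hx
    rw [hGg x hx] at h1
    nlinarith [hgp x hx]
  set q : ℝ → ℝ := fun z => (∫ t in z..(1:ℝ), t * f t) / (∫ t in z..(1:ℝ), t * gfun α β t)
    with hq
  have hqd : ∀ x ∈ Set.Ioo (0:ℝ) 1, HasDerivAt q 0 x := by
    intro x hx
    have hd : HasDerivAt q _ x := (hTf x hx).div (hTg x hx) (hGgpos x hx).ne'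
    convert hd using 1
    rw [hid x hx, hGg x hx]
    have hnum : -(x * f x) * (h x * gfun α β x) - h x * f x * -(x * gfun α β x) = 0 := by ring
    rw [hnum, zero_div]
  have key : ∀ a b : ℝ, a ∈ Set.Ioo (0:ℝ) 1 → b ∈ Set.Ioo (0:ℝ) 1 → a < b → q a = q b := by
    intro a b ha hb hab
    have hcont : ContinuousOn q (Set.Icc a b) := fun t ht =>
      ((hqd t ⟨lt_of_lt_of_le ha.1 ht.1, lt_of_le_of_lt ht.2 hb.2⟩).continuousAt).continuousWithinAt
    obtain ⟨c, hc, hc'⟩ := exists_hasDerivAt_eq_slope q (fun _ => 0) hab hcont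
      (fun t ht => hqd t ⟨lt_trans ha.1 ht.1, lt_trans ht.2 hb.2⟩)
    have hba : b - a ≠ 0 := sub_ne_zero.mpr hab.ne'
    have hc2 : (q b - q a) / (b - a) = 0 := by rw [← hc']
    have := (div_eq_iff hba).mp hc2
    linarith
  have hhalf : (1/2 : ℝ) ∈ Set.Ioo (0:ℝ) 1 := by norm_num
  have hconst : ∀ x ∈ Set.Ioo (0:ℝ) 1, q x = q (1/2) := by
    intro x hx
    rcases lt_trichotomy x (1/2) with hlt | heq | hgt
    · exact key x (1/2) hx hhalf hlt
    · rw [heq]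
    · exact (key (1/2) x hhalf hx hgt).symm
  have hqval : ∀ x ∈ Set.Ioo (0:ℝ) 1, q x = f x / gfun α β x := by
    intro x hx
    rw [hq]
    simp only
    rw [hid x hx, hGg x hx, mul_div_mul_left _ _ (hhpos x hx).ne']
  set c : ℝ := f (1/2) / gfun α β (1/2) with hc
  have hfg : ∀ x ∈ Set.Ioo (0:ℝ) 1, f x = c * gfun α β x := by
    intro x hx
    have h1 := hconst x hx
    rw [hqval x hx, hqval (1/2) hhalf] at h1
    rw [← hc] at h1
    rw [div_eq_iff (hgp x hx).ne'] at h1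
    rw [h1]
  have hcpos : 0 < c := div_pos (hf_pos _ hhalf) (hgp _ hhalf)
  -- integrability of f and g on (0,1]
  have hfint : IntervalIntegrable f volume 0 1 := by
    by_contra hcon
    rw [intervalIntegral.integral_undef hcon] at hf_int
    exact one_ne_zero hf_int.symm
  have hfIoc : MeasureTheory.IntegrableOn f (Set.Ioc 0 1) :=
    (intervalIntegrable_iff_integrableOn_Ioc_of_le zero_le_one).mp hfint
  have hres : volume.restrict (Set.Ioc (0:ℝ) 1) = volume.restrict (Set.Ioo (0:ℝ) 1) :=
    MeasureTheory.Measure.restrict_congr_set MeasureTheory.Ioo_ae_eq_Ioc.symm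
  have hae : (fun t => c⁻¹ * f t) =ᵐ[volume.restrict (Set.Ioc (0:ℝ) 1)] gfun α β := by
    rw [hres]
    filter_upwards [MeasureTheory.ae_restrict_mem measurableSet_Ioo] with t ht
    rw [hfg t ht]
    field_simp
  have hgIoc : MeasureTheory.IntegrableOn (gfun α β) (Set.Ioc 0 1) :=
    (hfIoc.const_mul c⁻¹).congr hae
  have hg1 := integral_g_Ioc hα hβ hgIoc
  have hfae : f =ᵐ[volume.restrict (Set.Ioc (0:ℝ) 1)] (fun t => c * gfun α β t) := by
    rw [hres]
    filter_upwards [MeasureTheory.ae_restrict_mem measurableSet_Ioo] with t ht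
    exact hfg t ht
  have hceq : c = 1 := by
    have h1 : (∫ t in (0:ℝ)..1, f t) = ∫ t in Set.Ioc (0:ℝ) 1, f t :=
      intervalIntegral.integral_of_le zero_le_one
    rw [h1] at hf_int
    rw [MeasureTheory.integral_congr_ae hfae, MeasureTheory.integral_const_mul, hg1] at hf_int
    linarith
  intro x hx
  have := hfg x hx
  rw [hceq, one_mul] at this
  rw [this]
  rfl
end G2
end
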